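/- Under the mirroring strategy (Player 2 responds to Player 1 placing a ball of color c in bin (a,b) by placing a ball of the opposite color in bin (-a,b)), Player 2's prescribed move is always legal: the required ball of the opposite color is available and bin (-a,b) is not full. -/

import Mathlib

/-- Bins labeled by pairs `(a,b)` with `a ∈ {+1,-1}` (encoded as `Bool`)
and `b ∈ {1,…,j}` (encoded as `Fin j`). -/
abbrev BinB (j : ℕ) := Bool × Fin j

/-- A move: a color (`true` = white, `false` = black) and a bin. -/
abbrev MoveB (j : ℕ) := Bool × BinB j

/-- A strategy: given the history of moves (most recent first), produce a move. -/
abbrev StratB (j : ℕ) := List (MoveB j) → MoveB j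

/-- The mirror of a move: the opposite color, in the paired bin `(-a,b)`. -/
def mirror (j : ℕ) (mv : MoveB j) : MoveB j := (!mv.1, (!mv.2.1, mv.2.2))

/-- `s2` is the mirroring (pairing) strategy: whenever the last move was `mv`,
it plays the opposite color in the paired bin. -/
def IsMirror (j : ℕ) (s2 : StratB j) : Prop :=
  ∀ (mv : MoveB j) (h : List (MoveB j)), s2 (mv :: h) = mirror j mv

/-- The history after `n` moves, Player 1 moving at even steps. -/
def histB (j : ℕ) (s1 s2 : StratB j) : ℕ → List (MoveB j)
  | 0 => []
  | n+1 =>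
      (if n % 2 = 0 then s1 (histB j s1 s2 n) else s2 (histB j s1 s2 n)) :: histB j s1 s2 n

/-- A move `mv` is legal after history `h`: a ball of that color remains
(there are `j*(2*m+1)` balls of each color) and the chosen bin is not full
(capacity `2*m+1`). -/
def legalMoveB (j m : ℕ) (h : List (MoveB j)) (mv : MoveB j) : Prop :=
  h.countP (fun x => x.1 == mv.1) < j * (2*m+1) ∧
  h.countP (fun x => x.2 == mv.2) < 2*m+1

/-- Number of white balls in bin `p` according to history `h`. -/
def whitesInB (j : ℕ) (h : List (MoveB j)) (p : BinB j) : ℕ :=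
  h.countP (fun x => x.1 == true && x.2 == p)

/-- Number of black balls in bin `p` according to history `h`. -/
def blacksInB (j : ℕ) (h : List (MoveB j)) (p : BinB j) : ℕ :=
  h.countP (fun x => x.1 == false && x.2 == p)

lemma balanced (j : ℕ) (s1 s2 : StratB j) (hs2 : IsMirror j s2) (k : ℕ) :
    (∀ c : Bool, (histB j s1 s2 (2*k)).countP (fun x => x.1 == c)
      = (histB j s1 s2 (2*k)).countP (fun x => x.1 == !c)) ∧
    (∀ p : BinB j, (histB j s1 s2 (2*k)).countP (fun x => x.2 == p)
      = (histB j s1 s2 (2*k)).countP (fun x => x.2 == (!p.1, p.2))) := by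
  induction k with
  | zero => simp [histB]
  | succ k ih =>
    have e1 : 2*(k+1) = (2*k+1)+1 := by ring
    have hmod : (2*k) % 2 = 0 := by omega
    have hmod1 : (2*k+1) % 2 = 1 := by omega
    set h0 := histB j s1 s2 (2*k) with hh0
    have eh1 : histB j s1 s2 (2*k+1) = s1 h0 :: h0 := by
      simp [histB, hmod, ← hh0]
    have eh2 : histB j s1 s2 (2*(k+1)) = mirror j (s1 h0) :: s1 h0 :: h0 := by
      rw [e1]
      simp [histB, hmod1, hmod, ← hh0, hs2 (s1 h0) h0]
    rw [eh2]
    obtain ⟨ihc, ihp⟩ := ih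
    constructor
    · intro c
      simp only [List.countP_cons]
      rw [ihc c]
      obtain ⟨a, b⟩ := s1 h0
      cases a <;> cases c <;> simp [mirror]
    · intro p
      simp only [List.countP_cons]
      rw [ihp p]
      obtain ⟨a, pa, pb⟩ := s1 h0
      obtain ⟨q1, q2⟩ := p
      have : mirror j (a, pa, pb) = (!a, !pa, pb) := rfl
      rw [this]
      simp only []
      by_cases hb : pb = q2
      · subst hb; cases pa <;> cases q1 <;> simp [Prod.ext_iff]
      · simp [Prod.ext_iff, hb]


/-- Under the mirroring strategy, Player 2's prescribed move
is always legal: at every odd step, if Player 1 has played legally at all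
even steps so far, then the mirror move (opposite color, paired bin) is legal,
i.e. the required ball is available and the paired bin is not full. -/
theorem mirror_always_legal (j m : ℕ) (hj : 0 < j)
    (s1 s2 : StratB j) (hs2 : IsMirror j s2)
    (h1 : ∀ n < 2*j*(2*m+1), n % 2 = 0 →
      legalMoveB j m (histB j s1 s2 n) (s1 (histB j s1 s2 n))) :
    ∀ n < 2*j*(2*m+1), n % 2 = 1 →
      legalMoveB j m (histB j s1 s2 n) (s2 (histB j s1 s2 n)) := by
  intro n hn hodd
  obtain ⟨k, rfl⟩ : ∃ k, n = 2*k+1 := ⟨n/2, by omega⟩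
  have hmod : (2*k) % 2 = 0 := by omega
  set h0 := histB j s1 s2 (2*k) with hh0
  have eh1 : histB j s1 s2 (2*k+1) = s1 h0 :: h0 := by simp [histB, hmod, ← hh0]
  have hleg := h1 (2*k) (by omega) hmod
  obtain ⟨hc, hp⟩ := hleg
  obtain ⟨bal_c, bal_p⟩ := balanced j s1 s2 hs2 k
  rw [eh1, hs2 (s1 h0) h0]
  set mv := s1 h0 with hmv
  clear_value mv
  obtain ⟨a, pa, pb⟩ := mv
  constructor
  · show ((a,pa,pb) :: h0).countP (fun x => x.1 == !a) < _
    rw [List.countP_cons]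
    have := bal_c a
    simp only at hc this ⊢
    rw [← this]
    simpa using hc
  · show ((a,pa,pb) :: h0).countP (fun x => x.2 == (!pa, pb)) < _
    rw [List.countP_cons]
    have := bal_p (pa, pb)
    simp only at hp this ⊢
    rw [← this]
    simpa [Prod.ext_iff] using hp
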